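/- Let G be a group, let H₀ = {1} ⊆ H₁ ⊆ ⋯ ⊆ H_k be a nested sequence of subgroups of G, let K ≥ 1 be a real number, and let A be a K-approximate subgroup of G. For each i set A_i := A² ∩ H_i, and assume that for every i = 0, …, k−1 the subgroup generated by A_{i+1} is not contained in the set A_{i+1}·H_i. Then k ≤ K⁴. -/

import Mathlib

open scoped Pointwise

/-- A finite subset `A` of a group `G` is a `K`-approximate subgroup if it is
symmetric, contains the identity, and there is a symmetric subset `X ⊆ A·A·A`
with `|X| ≤ K` such that `A·A ⊆ X·A`. -/
def IsApproxSubgroup {G : Type*} [Group G] (K : ℝ) (A : Set G) : Prop :=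
  A.Finite ∧ (1 : G) ∈ A ∧ (∀ a ∈ A, a⁻¹ ∈ A) ∧
    ∃ X : Set G, X.Finite ∧ X ⊆ A * A * A ∧ (∀ x ∈ X, x⁻¹ ∈ X) ∧
      (X.ncard : ℝ) ≤ K ∧ A * A ⊆ X * A

/-- If `S` is symmetric and `S * S ⊆ S * H`, then `⟨S⟩ ⊆ S * H`. -/
lemma closure_subset_of_sq {G : Type*} [Group G] (S : Set G) (Hi : Subgroup G)
    (h1S : (1 : G) ∈ S) (hSsymm : ∀ z ∈ S, z⁻¹ ∈ S)
    (hSS : S * S ⊆ S * (Hi : Set G)) :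
    (Subgroup.closure S : Set G) ⊆ S * (Hi : Set G) := by
  intro x hx
  have hx' : x ∈ (Subgroup.closure S).toSubmonoid := hx
  rw [Subgroup.closure_toSubmonoid] at hx'
  have hunion : S ∪ S⁻¹ = S := by
    apply Set.union_eq_self_of_subset_right
    intro z hz
    rw [Set.mem_inv] at hz
    simpa using hSsymm _ hz
  rw [hunion] at hx'
  obtain ⟨l, hl, rfl⟩ := Submonoid.exists_list_of_mem_closure hx'
  have key : ∀ l : List G, (∀ y ∈ l, y ∈ S) → l.prod ∈ S * (Hi : Set G) := by
    intro l
    induction l with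
    | nil =>
      intro _
      simp only [List.prod_nil]
      exact ⟨1, h1S, 1, Hi.one_mem, mul_one 1⟩
    | cons y l ih =>
      intro hl
      have hy : y ∈ S := hl y List.mem_cons_self
      obtain ⟨s, hs, h, hh, heq⟩ := ih (fun z hz => hl z (List.mem_cons_of_mem y hz))
      have : y * (s * h) ∈ S * (Hi : Set G) := by
        rw [← mul_assoc]
        obtain ⟨s', hs', h', hh', heq'⟩ := hSS (Set.mul_mem_mul hy hs)
        rw [← heq', mul_assoc]
        exact Set.mul_mem_mul hs' (Hi.mul_mem hh' hh)
      rw [show s * h = l.prod from heq] at this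
      simpa using this
  exact key l hl

/-- If `A` is a `K`-approximate subgroup and `{1} = H₀ ⊆ H₁ ⊆ ⋯ ⊆ H_k` is a
chain of subgroups with `⟨A_{i+1}⟩ ⊄ A_{i+1}·H_i` for all `i < k`, where
`A_i := A² ∩ H_i`, then `k ≤ K⁴`. -/
theorem stmt_5 {G : Type*} [Group G] (k : ℕ) (H : ℕ → Subgroup G)
    (hH0 : H 0 = ⊥) (hmono : ∀ i, i < k → H i ≤ H (i + 1))
    (K : ℝ) (hK : 1 ≤ K) (A : Set G) (hA : IsApproxSubgroup K A)
    (hgen : ∀ i, i < k →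
      ¬ ((Subgroup.closure (A * A ∩ (H (i + 1) : Set G)) : Set G) ⊆
          (A * A ∩ (H (i + 1) : Set G)) * (H i : Set G))) :
    (k : ℝ) ≤ K ^ 4 := by
  classical
  obtain ⟨hAfin, h1A, hAsymm, X, hXfin, hXsub, hXsymm, hXK, hXA⟩ := hA
  set S : ℕ → Set G := fun i => A * A ∩ (H (i + 1) : Set G) with hSdef
  -- basic facts about S
  have h1AA : (1 : G) ∈ A * A := by simpa using Set.mul_mem_mul h1A h1A
  have h1S : ∀ i, (1 : G) ∈ S i := fun i => ⟨h1AA, (H (i + 1)).one_mem⟩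
  have hSsymm : ∀ i, ∀ z ∈ S i, z⁻¹ ∈ S i := by
    intro i z hz
    obtain ⟨⟨a, ha, b, hb, rfl⟩, hzH⟩ := hz
    refine ⟨?_, (H (i + 1)).inv_mem hzH⟩
    rw [mul_inv_rev]
    exact Set.mul_mem_mul (hAsymm b hb) (hAsymm a ha)
  have hSH : ∀ i, S i ⊆ (H (i + 1) : Set G) := fun i => Set.inter_subset_right
  -- chain monotonicity
  have hchain : ∀ i j : ℕ, i ≤ j → j ≤ k → H i ≤ H j := by
    intro i j hij
    induction hij with
    | refl => intro _; exact le_rfl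
    | @step m hm ih =>
      intro hjk
      exact (ih ((Nat.le_succ m).trans hjk)).trans (hmono m (Nat.lt_of_succ_le hjk))
  -- existence of elements x i ∈ S i * S i \ S i * H i
  have hx : ∀ i : Fin k, ∃ x, x ∈ S i * S i ∧ x ∉ S i * (H (i : ℕ) : Set G) := by
    intro ⟨i, hi⟩
    by_contra hcon
    push_neg at hcon
    exact hgen i hi (closure_subset_of_sq _ _ (h1S i) (hSsymm i) hcon)
  choose x hx1 hx2 using hx
  have hxH : ∀ i : Fin k, x i ∈ H ((i : ℕ) + 1) := by
    intro i
    obtain ⟨s, hs, t, ht, heq⟩ := hx1 i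
    rw [← heq]
    exact (H ((i : ℕ) + 1)).mul_mem (hSH _ hs) (hSH _ ht)
  -- key disjointness
  have hkey : ∀ i j : Fin k, (i : ℕ) < (j : ℕ) → ∀ a ∈ A, ∀ a' ∈ A,
      a * x i ≠ a' * x j := by
    intro i j hij a ha a' ha' heq
    apply hx2 j
    have hxj : x j = (a'⁻¹ * a) * x i := by
      rw [mul_assoc, heq, ← mul_assoc, inv_mul_cancel, one_mul]
    have hxiHj : x i ∈ H (j : ℕ) :=
      hchain _ _ hij (le_of_lt j.isLt) (hxH i)
    have hb : a'⁻¹ * a ∈ A * A := Set.mul_mem_mul (hAsymm a' ha') ha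
    have hbH : a'⁻¹ * a ∈ H ((j : ℕ) + 1) := by
      have : a'⁻¹ * a = x j * (x i)⁻¹ := by rw [hxj, mul_assoc, mul_inv_cancel, mul_one]
      rw [this]
      exact (H _).mul_mem (hxH j) ((H _).inv_mem (hmono _ j.isLt hxiHj))
    rw [hxj]
    exact Set.mul_mem_mul ⟨hb, hbH⟩ hxiHj
  -- injective map into A^5
  set T : Set G := A * A * A * A * A with hTdef
  have hmemT : ∀ (i : Fin k), ∀ a ∈ A, a * x i ∈ T := by
    intro i a ha
    have hx4 : x i ∈ A * A * A * A := by
      obtain ⟨s, ⟨hs, _⟩, t, ⟨ht, _⟩, heq⟩ := hx1 i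
      rw [← heq]
      have : s * t ∈ (A * A) * (A * A) := Set.mul_mem_mul hs ht
      rwa [← mul_assoc] at this
    have : a * x i ∈ A * (A * A * A * A) := Set.mul_mem_mul ha hx4
    rw [hTdef]
    simp only [mul_assoc] at this ⊢
    exact this
  have hTfin : T.Finite := ((((hAfin.mul hAfin).mul hAfin).mul hAfin).mul hAfin)
  haveI : Finite T := hTfin.to_subtype
  haveI : Finite A := hAfin.to_subtype
  -- injectivity
  set g : Fin k × A → T := fun p => ⟨(p.2 : G) * x p.1, hmemT p.1 p.2 p.2.2⟩ with hgdef
  have hginj : Function.Injective g := by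
    intro ⟨i, a⟩ ⟨j, a'⟩ hgeq
    have heq : (a : G) * x i = (a' : G) * x j := congrArg Subtype.val hgeq
    have hij : i = j := by
      by_contra hne
      rcases lt_or_gt_of_ne (fun h : (i : ℕ) = (j : ℕ) => hne (Fin.ext h)) with h | h
      · exact hkey i j h a a.2 a' a'.2 heq
      · exact hkey j i h a' a'.2 a a.2 heq.symm
    subst hij
    have : (a : G) = a' := mul_right_cancel heq
    simp [Prod.ext_iff, Subtype.ext this]
  have hcard : k * A.ncard ≤ T.ncard := by
    have := Nat.card_le_card_of_injective g hginj
    rwa [Nat.card_prod, Nat.card_eq_fintype_card, Fintype.card_fin,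
      Nat.card_coe_set_eq, Nat.card_coe_set_eq] at this
  -- covering bound: T ⊆ X*X*X*X*A
  have hTsub : T ⊆ X * X * X * X * A := by
    have h2 : A * A ⊆ X * A := hXA
    have h3 : A * A * A ⊆ X * X * A := by
      calc A * A * A ⊆ X * A * A := Set.mul_subset_mul_right hXA
        _ = X * (A * A) := mul_assoc _ _ _
        _ ⊆ X * (X * A) := Set.mul_subset_mul_left hXA
        _ = X * X * A := (mul_assoc _ _ _).symm
    have h4 : A * A * A * A ⊆ X * X * X * A := by
      calc A * A * A * A ⊆ X * X * A * A := Set.mul_subset_mul_right h3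
        _ = X * X * (A * A) := mul_assoc _ _ _
        _ ⊆ X * X * (X * A) := Set.mul_subset_mul_left hXA
        _ = X * X * X * A := (mul_assoc _ _ _).symm
    calc T ⊆ X * X * X * A * A := Set.mul_subset_mul_right h4
      _ = X * X * X * (A * A) := mul_assoc _ _ _
      _ ⊆ X * X * X * (X * A) := Set.mul_subset_mul_left hXA
      _ = X * X * X * X * A := (mul_assoc _ _ _).symm
  have hXXfin : (X * X * X * X * A).Finite :=
    ((((hXfin.mul hXfin).mul hXfin).mul hXfin).mul hAfin)
  have hTcard : T.ncard ≤ X.ncard ^ 4 * A.ncard := by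
    calc T.ncard ≤ (X * X * X * X * A).ncard :=
          Set.ncard_le_ncard hTsub hXXfin
      _ ≤ X.ncard * X.ncard * X.ncard * X.ncard * A.ncard := by
          simp only [← Nat.card_coe_set_eq]
          calc Nat.card ↥(X * X * X * X * A)
              ≤ Nat.card ↥(X * X * X * X) * Nat.card ↥A := Set.natCard_mul_le
            _ ≤ Nat.card ↥(X * X * X) * Nat.card ↥X * Nat.card ↥A := by
                exact Nat.mul_le_mul_right _ Set.natCard_mul_le
            _ ≤ Nat.card ↥(X * X) * Nat.card ↥X * Nat.card ↥X * Nat.card ↥A := by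
                exact Nat.mul_le_mul_right _ (Nat.mul_le_mul_right _ Set.natCard_mul_le)
            _ ≤ Nat.card ↥X * Nat.card ↥X * Nat.card ↥X * Nat.card ↥X * Nat.card ↥A := by
                exact Nat.mul_le_mul_right _ (Nat.mul_le_mul_right _
                  (Nat.mul_le_mul_right _ Set.natCard_mul_le))
      _ = X.ncard ^ 4 * A.ncard := by ring
  have hApos : 0 < A.ncard := (Set.ncard_pos hAfin).mpr ⟨1, h1A⟩
  have hk : k ≤ X.ncard ^ 4 :=
    Nat.le_of_mul_le_mul_right (hcard.trans hTcard) hApos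
  calc (k : ℝ) ≤ (X.ncard : ℝ) ^ 4 := by exact_mod_cast hk
    _ ≤ K ^ 4 := by
        apply pow_le_pow_left₀ (by positivity) hXK
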